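/- Let σ and τ be permutations of finite sets of sizes m and n respectively. If for every positive integer N, σ^N and τ^N have the same number of fixed points, then m = n and σ and τ have the same cycle type (i.e., the multisets of their cycle lengths coincide). -/

import Mathlib

open Equiv Equiv.Perm Finset

private def Lfun {α : Type*} [Fintype α] [DecidableEq α] (σ : Equiv.Perm α) (x : α) : ℕ :=
  if σ x = x then 1 else (σ.cycleOf x).support.card

private lemma Lfun_pos {α : Type*} [Fintype α] [DecidableEq α] (σ : Equiv.Perm α) (x : α) :
    0 < Lfun σ x := by
  unfold Lfun
  split_ifs with h
  · exact one_pos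
  · have h2 : 2 ≤ (σ.cycleOf x).support.card :=
      (Equiv.Perm.two_le_card_support_cycleOf_iff).2 h
    omega

private lemma pow_fix {α : Type*} [Fintype α] [DecidableEq α] (σ : Equiv.Perm α) (x : α)
    (N : ℕ) : (σ ^ N) x = x ↔ Lfun σ x ∣ N := by
  unfold Lfun
  split_ifs with h
  · simp [Equiv.Perm.pow_apply_eq_self_of_apply_eq_self h]
  · have hx : x ∈ (σ.cycleOf x).support :=
      Equiv.Perm.mem_support_cycleOf_iff.2 ⟨Equiv.Perm.SameCycle.refl _ _,
        Equiv.Perm.mem_support.2 h⟩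
    exact (σ.isCycleOn_support_cycleOf x).pow_apply_eq hx

private def cnt {α : Type*} [Fintype α] [DecidableEq α] (σ : Equiv.Perm α) (d : ℕ) : ℕ :=
  (Finset.univ.filter fun x => Lfun σ x = d).card

private lemma cnt_zero {α : Type*} [Fintype α] [DecidableEq α] (σ : Equiv.Perm α) :
    cnt σ 0 = 0 := by
  unfold cnt
  rw [Finset.card_eq_zero, Finset.filter_eq_empty_iff]
  intro x _
  exact (Lfun_pos σ x).ne'

private lemma fix_card {α : Type*} [Fintype α] [DecidableEq α] (σ : Equiv.Perm α) {N : ℕ}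
    (hN : 0 < N) :
    (Finset.univ.filter fun x => (σ ^ N) x = x).card = ∑ d ∈ N.divisors, cnt σ d := by
  have h1 : (Finset.univ.filter fun x => (σ ^ N) x = x)
      = Finset.univ.filter fun x => Lfun σ x ∣ N := by
    ext x; simp [pow_fix]
  rw [h1, Finset.card_eq_sum_card_fiberwise (f := fun x => Lfun σ x) (t := N.divisors)
    (fun x hx => Nat.mem_divisors.2 ⟨(Finset.mem_filter.1 hx).2, hN.ne'⟩)]
  refine Finset.sum_congr rfl fun d hd => ?_
  unfold cnt
  congr 1
  ext x
  simp only [Finset.mem_filter, Finset.mem_univ, true_and]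
  exact ⟨fun h => h.2, fun h => ⟨h ▸ (Nat.mem_divisors.1 hd).1, h⟩⟩

private lemma cnt_eq {α β : Type*} [Fintype α] [DecidableEq α] [Fintype β] [DecidableEq β]
    (σ : Equiv.Perm α) (τ : Equiv.Perm β)
    (H : ∀ N, 0 < N → ∑ d ∈ N.divisors, cnt σ d = ∑ d ∈ N.divisors, cnt τ d) :
    ∀ d, cnt σ d = cnt τ d := by
  intro d
  induction d using Nat.strong_induction_on with
  | _ d ih =>
    rcases Nat.eq_zero_or_pos d with rfl | hd
    · rw [cnt_zero, cnt_zero]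
    · have h1 := H d hd
      rw [← Nat.insert_self_properDivisors hd.ne', Finset.sum_insert Nat.self_notMem_properDivisors,
        Finset.sum_insert Nat.self_notMem_properDivisors] at h1
      have h2 : ∑ e ∈ d.properDivisors, cnt σ e = ∑ e ∈ d.properDivisors, cnt τ e :=
        Finset.sum_congr rfl fun e he => ih e (Nat.mem_properDivisors.1 he).2
      omega

private lemma cnt_eq_mul {α : Type*} [Fintype α] [DecidableEq α] (σ : Equiv.Perm α) {k : ℕ}
    (hk : 2 ≤ k) : cnt σ k = k * Multiset.count k σ.cycleType := by
  classical
  have hset : (Finset.univ.filter fun x => Lfun σ x = k)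
      = σ.support.filter fun x => (σ.cycleOf x).support.card = k := by
    ext x
    simp only [Finset.mem_filter, Finset.mem_univ, true_and, Equiv.Perm.mem_support]
    unfold Lfun
    split_ifs with h
    · exact ⟨fun h1 => absurd h1 (by omega), fun h1 => absurd h h1.1⟩
    · exact ⟨fun h1 => ⟨h, h1⟩, fun h1 => h1.2⟩
  set F : Finset (Equiv.Perm α) := σ.cycleFactorsFinset.filter fun c => c.support.card = k with hF
  have hcard : (σ.support.filter fun x => (σ.cycleOf x).support.card = k).card
      = ∑ c ∈ F, ((σ.support.filter fun x => (σ.cycleOf x).support.card = k).filter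
          fun x => σ.cycleOf x = c).card := by
    apply Finset.card_eq_sum_card_fiberwise
    intro x hx
    simp only [Finset.mem_coe, Finset.mem_filter] at hx
    exact Finset.mem_filter.2 ⟨Equiv.Perm.cycleOf_mem_cycleFactorsFinset_iff.2 hx.1, hx.2⟩
  have hfiber : ∀ c ∈ F, ((σ.support.filter fun x => (σ.cycleOf x).support.card = k).filter
      fun x => σ.cycleOf x = c) = c.support := by
    intro c hc
    rw [hF, Finset.mem_filter] at hc
    ext x
    simp only [Finset.mem_filter]
    constructor
    · rintro ⟨⟨_, _⟩, h3⟩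
      rw [← h3]
      exact Equiv.Perm.mem_support_cycleOf_iff.2 ⟨Equiv.Perm.SameCycle.refl _ _, by
        simpa using (by simp_all : x ∈ σ.support)⟩
    · intro hx
      have hco : c = σ.cycleOf x := Equiv.Perm.cycle_is_cycleOf hx hc.1
      have hxs : x ∈ σ.support := Equiv.Perm.mem_cycleFactorsFinset_support_le hc.1 hx
      exact ⟨⟨hxs, by rw [← hco]; exact hc.2⟩, hco.symm⟩
  have hsum : ∑ c ∈ F, ((σ.support.filter fun x => (σ.cycleOf x).support.card = k).filter
      fun x => σ.cycleOf x = c).card = ∑ c ∈ F, k := by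
    refine Finset.sum_congr rfl fun c hc => ?_
    rw [hfiber c hc]
    exact (Finset.mem_filter.1 hc).2
  have hcount : Multiset.count k σ.cycleType = F.card := by
    rw [Equiv.Perm.cycleType_def, Multiset.count_map, hF]
    simp only [Finset.card, Finset.filter_val, Function.comp]
    congr 1
    apply Multiset.filter_congr
    intro c _
    exact eq_comm
  unfold cnt
  rw [hset, hcard, hsum, Finset.sum_const, smul_eq_mul, hcount, mul_comm]

theorem same_fixedPoints_pow_imp_same_cycleType
    (m n : ℕ) (sigma : Equiv.Perm (Fin m)) (tau : Equiv.Perm (Fin n))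
    (h : ∀ N : ℕ, 0 < N →
      (Finset.univ.filter (fun x : Fin m => (sigma ^ N) x = x)).card
        = (Finset.univ.filter (fun x : Fin n => (tau ^ N) x = x)).card) :
    m = n ∧ sigma.cycleType = tau.cycleType := by
  have H : ∀ N, 0 < N → ∑ d ∈ N.divisors, cnt sigma d = ∑ d ∈ N.divisors, cnt tau d := by
    intro N hN
    rw [← fix_card sigma hN, ← fix_card tau hN]
    exact h N hN
  have hc := cnt_eq sigma tau H
  constructor
  · set N := orderOf sigma * orderOf tau with hNdef
    have hN : 0 < N := Nat.mul_pos (orderOf_pos sigma) (orderOf_pos tau)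
    have h1 : sigma ^ N = 1 := by
      rw [hNdef, pow_mul, pow_orderOf_eq_one, one_pow]
    have h2 : tau ^ N = 1 := by
      rw [hNdef, mul_comm, pow_mul, pow_orderOf_eq_one, one_pow]
    have := h N hN
    rw [h1, h2] at this
    simpa using this
  · ext k
    rcases lt_or_ge k 2 with hk | hk
    · rw [Multiset.count_eq_zero.2 (fun hmem => by
          have := Equiv.Perm.two_le_of_mem_cycleType hmem; omega),
        Multiset.count_eq_zero.2 (fun hmem => by
          have := Equiv.Perm.two_le_of_mem_cycleType hmem; omega)]
    · have := hc k
      rw [cnt_eq_mul sigma hk, cnt_eq_mul tau hk] at this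
      exact Nat.eq_of_mul_eq_mul_left (by omega) this
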